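/- Let A ∈ ℝ^{m×n} satisfy the restricted isometry property of order 2s with constant δ < 1/√2, i.e., (1−δ)‖z‖₂² ≤ ‖Az‖₂² ≤ (1+δ)‖z‖₂² holds for all 2s-sparse z ∈ ℝⁿ. Then every s-sparse vector v ∈ ℝⁿ is the unique minimizer of ‖z‖₁ over all z ∈ ℝⁿ satisfying Az = Av. -/

import Mathlib

open Matrix

/-- `z` has at most `s` nonzero entries. -/
def IsSparse {n : ℕ} (s : ℕ) (z : Fin n → ℝ) : Prop :=
  ∃ T : Finset (Fin n), T.card ≤ s ∧ ∀ i ∉ T, z i = 0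

/-- The ℓ¹ norm on `Fin k → ℝ`. -/
noncomputable def l1norm {k : ℕ} (x : Fin k → ℝ) : ℝ := ∑ i, |x i|


lemma abs_add_sign (a e : ℝ) (ha : a ≠ 0) (he : 0 ≤ e) : |a + e * Real.sign a| = |a| + e := by
  rcases lt_or_gt_of_ne ha with h | h
  · rw [Real.sign_of_neg h, abs_of_neg h, abs_of_neg (by nlinarith)]; ring
  · rw [Real.sign_of_pos h, abs_of_pos h, abs_of_pos (by nlinarith)]; ring

lemma abs_sub_sign (a e : ℝ) (ha : a ≠ 0) (he : 0 ≤ e) (he' : e ≤ |a|) :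
    |a - e * Real.sign a| = |a| - e := by
  rcases lt_or_gt_of_ne ha with h | h
  · rw [Real.sign_of_neg h, abs_of_neg h] at *
    rw [abs_of_nonpos (by nlinarith)]; ring
  · rw [Real.sign_of_pos h, abs_of_pos h] at *
    rw [abs_of_nonneg (by nlinarith)]; ring



lemma sparse_of_few_partial {n : ℕ} (s : ℕ) (α : ℝ) (hα : 0 ≤ α) (v : Fin n → ℝ)
    (hPt : (Finset.univ.filter (fun j => 0 < |v j| ∧ |v j| < α)).card ≤ 1)
    (hbd : ∀ j, |v j| ≤ α) (hl1 : (∑ j, |v j|) ≤ s * α) :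
    IsSparse s v := by
  set Pt := Finset.univ.filter (fun j => 0 < |v j| ∧ |v j| < α) with hPtdef
  rcases eq_or_lt_of_le hα with hα0 | hα0
  · refine ⟨∅, by simp, fun i _ => ?_⟩
    have := hbd i
    rw [← hα0] at this
    have := abs_nonneg (v i)
    have : |v i| = 0 := le_antisymm ‹|v i| ≤ 0› this
    exact abs_eq_zero.mp this
  · set F := Finset.univ.filter (fun j => |v j| = α) with hFdef
    have hsupp : (Finset.univ.filter (fun j => v j ≠ 0)) ⊆ F ∪ Pt := by
      intro j hj
      simp only [Finset.mem_filter, Finset.mem_univ, true_and] at hj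
      have h0 : 0 < |v j| := abs_pos.mpr hj
      rcases lt_or_eq_of_le (hbd j) with h | h
      · exact Finset.mem_union_right _ (by simp [hPtdef, h0, h, hj])
      · exact Finset.mem_union_left _ (by simp [hFdef, h])
    have hFsum : (F.card : ℝ) * α ≤ ∑ j, |v j| := by
      have : (F.card : ℝ) * α = ∑ j ∈ F, |v j| := by
        rw [Finset.sum_congr rfl (fun j hj => by
          simp only [hFdef, Finset.mem_filter] at hj; exact hj.2)]
        simp [mul_comm]
      rw [this]
      exact Finset.sum_le_sum_of_subset_of_nonneg (Finset.subset_univ F)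
        (fun i _ _ => abs_nonneg _)
    refine ⟨F ∪ Pt, ?_, fun i hi => ?_⟩
    · have hcard : (F ∪ Pt).card ≤ F.card + Pt.card := Finset.card_union_le _ _
      rcases Finset.eq_empty_or_nonempty Pt with hPe | ⟨j₀, hj₀⟩
      · have h1 : (F.card : ℝ) * α ≤ s * α := le_trans hFsum hl1
        have h2 : (F.card : ℝ) ≤ s := le_of_mul_le_mul_right h1 hα0
        have : F.card ≤ s := by exact_mod_cast h2
        calc (F ∪ Pt).card ≤ F.card + Pt.card := hcard
        _ ≤ s + 0 := by
            refine Nat.add_le_add this ?_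
            simp [hPe]
        _ = s := by omega
      · have hj₀' : 0 < |v j₀| ∧ |v j₀| < α := by
          simpa [hPtdef] using hj₀
        have hj₀F : j₀ ∉ F := by
          simp only [hFdef, Finset.mem_filter, Finset.mem_univ, true_and]
          exact ne_of_lt hj₀'.2
        have hsum2 : (F.card : ℝ) * α + |v j₀| ≤ s * α := by
          have : ∑ j ∈ insert j₀ F, |v j| ≤ ∑ j, |v j| :=
            Finset.sum_le_sum_of_subset_of_nonneg (Finset.subset_univ _)
              (fun i _ _ => abs_nonneg _)
          rw [Finset.sum_insert hj₀F] at this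
          have hF : (F.card : ℝ) * α = ∑ j ∈ F, |v j| := by
            rw [Finset.sum_congr rfl (fun j hj => by
              simp only [hFdef, Finset.mem_filter] at hj; exact hj.2)]
            simp [mul_comm]
          linarith
        have hFlt : (F.card : ℝ) < s := by
          have h1 := hj₀'.1
          have h2 : (F.card : ℝ) * α < s * α := by linarith
          exact lt_of_mul_lt_mul_right h2 hα
        have hFlt' : F.card < s := by exact_mod_cast hFlt
        calc (F ∪ Pt).card ≤ F.card + Pt.card := hcard
        _ ≤ F.card + 1 := Nat.add_le_add_left hPt _
        _ ≤ s := by omega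
    · by_contra hvi
      exact hi (hsupp (by simp [hvi]))



lemma polytope {n : ℕ} (s : ℕ) (α : ℝ) (hα : 0 ≤ α) :
    ∀ (p : ℕ) (v : Fin n → ℝ),
      (Finset.univ.filter (fun j => 0 < |v j| ∧ |v j| < α)).card ≤ p →
      (∀ j, |v j| ≤ α) → (∑ j, |v j|) ≤ s * α →
      ∃ (k : ℕ) (lam : Fin k → ℝ) (u : Fin k → Fin n → ℝ),
        (∀ i, 0 ≤ lam i) ∧ (∑ i, lam i) = 1 ∧
        (∀ j, v j = ∑ i, lam i * u i j) ∧
        (∀ i, IsSparse s (u i)) ∧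
        (∀ i j, |u i j| ≤ α) ∧
        (∀ i j, v j = 0 → u i j = 0) := by
  intro p
  induction p with
  | zero =>
    intro v hcard hbd hl1
    refine ⟨1, fun _ => 1, fun _ => v, fun _ => zero_le_one, by simp, by simp, ?_, by simp [hbd], by simp⟩
    intro i
    exact sparse_of_few_partial s α hα v (le_trans hcard (by omega)) hbd hl1
  | succ p ih =>
    intro v hcard hbd hl1
    by_cases hfew : (Finset.univ.filter (fun j => 0 < |v j| ∧ |v j| < α)).card ≤ 1
    · refine ⟨1, fun _ => 1, fun _ => v, fun _ => zero_le_one, by simp, by simp, ?_, by simp [hbd], by simp⟩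
      intro i
      exact sparse_of_few_partial s α hα v hfew hbd hl1
    · -- at least two partial coordinates
      push_neg at hfew
      set Pt := Finset.univ.filter (fun j => 0 < |v j| ∧ |v j| < α) with hPtdef
      obtain ⟨j₁, hj₁, j₂, hj₂, hne⟩ := Finset.one_lt_card.mp hfew
      have hj₁' : 0 < |v j₁| ∧ |v j₁| < α := by simpa [hPtdef] using hj₁
      have hj₂' : 0 < |v j₂| ∧ |v j₂| < α := by simpa [hPtdef] using hj₂
      have hv₁ : v j₁ ≠ 0 := abs_pos.mp hj₁'.1
      have hv₂ : v j₂ ≠ 0 := abs_pos.mp hj₂'.1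
      set eP := min (α - |v j₁|) |v j₂| with hePdef
      set eM := min (|v j₁|) (α - |v j₂|) with heMdef
      have heP : 0 < eP := lt_min (by linarith [hj₁'.2]) hj₂'.1
      have heM : 0 < eM := lt_min hj₁'.1 (by linarith [hj₂'.2])
      set vP : Fin n → ℝ := fun j =>
        if j = j₁ then v j₁ + eP * Real.sign (v j₁)
        else if j = j₂ then v j₂ - eP * Real.sign (v j₂) else v j with hvPdef
      set vM : Fin n → ℝ := fun j =>
        if j = j₁ then v j₁ - eM * Real.sign (v j₁)
        else if j = j₂ then v j₂ + eM * Real.sign (v j₂) else v j with hvMdef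
      -- absolute values
      have haP1 : |vP j₁| = |v j₁| + eP := by
        simp only [hvPdef, if_pos rfl]
        exact abs_add_sign _ _ hv₁ heP.le
      have haP2 : |vP j₂| = |v j₂| - eP := by
        simp only [hvPdef, if_neg (Ne.symm hne), if_pos rfl]
        exact abs_sub_sign _ _ hv₂ heP.le (min_le_right _ _)
      have haM1 : |vM j₁| = |v j₁| - eM := by
        simp only [hvMdef, if_pos rfl]
        exact abs_sub_sign _ _ hv₁ heM.le (min_le_left _ _)
      have haM2 : |vM j₂| = |v j₂| + eM := by
        simp only [hvMdef, if_neg (Ne.symm hne), if_pos rfl]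
        exact abs_add_sign _ _ hv₂ heM.le
      have hvPo : ∀ j, j ≠ j₁ → j ≠ j₂ → vP j = v j := by
        intro j h1 h2; simp [hvPdef, h1, h2]
      have hvMo : ∀ j, j ≠ j₁ → j ≠ j₂ → vM j = v j := by
        intro j h1 h2; simp [hvMdef, h1, h2]
      -- l∞ bounds
      have hePle : eP ≤ α - |v j₁| := min_le_left _ _
      have hePle2 : eP ≤ |v j₂| := min_le_right _ _
      have heMle : eM ≤ |v j₁| := min_le_left _ _
      have heMle2 : eM ≤ α - |v j₂| := min_le_right _ _
      have hbdP : ∀ j, |vP j| ≤ α := by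
        intro j
        by_cases h1 : j = j₁
        · rw [h1, haP1]; linarith
        by_cases h2 : j = j₂
        · rw [h2, haP2]; linarith [hj₂'.2, heP]
        · rw [hvPo j h1 h2]; exact hbd j
      have hbdM : ∀ j, |vM j| ≤ α := by
        intro j
        by_cases h1 : j = j₁
        · rw [h1, haM1]; linarith [hj₁'.2, heM]
        by_cases h2 : j = j₂
        · rw [h2, haM2]; linarith
        · rw [hvMo j h1 h2]; exact hbd j
      -- l1 sums preserved
      have habs_split : ∀ (w : Fin n → ℝ), (∀ j, j ≠ j₁ → j ≠ j₂ → w j = v j) →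
          (∑ j, |w j|) = (∑ j, |v j|) + (|w j₁| - |v j₁|) + (|w j₂| - |v j₂|) := by
        intro w hw
        have key : ∀ j, |w j| = |v j| + ((if j = j₁ then |w j₁| - |v j₁| else 0)
            + (if j = j₂ then |w j₂| - |v j₂| else 0)) := by
          intro j
          rcases eq_or_ne j j₁ with rfl | h1
          · simp [if_pos rfl, if_neg hne]
          rcases eq_or_ne j j₂ with rfl | h2
          · simp [if_neg h1, if_pos rfl]
          · simp [if_neg h1, if_neg h2, hw j h1 h2]
        rw [Finset.sum_congr rfl (fun j _ => key j)]
        rw [Finset.sum_add_distrib, Finset.sum_add_distrib]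
        simp only [Finset.sum_ite_eq' Finset.univ, Finset.mem_univ, if_pos]
        ring
      have hl1P : (∑ j, |vP j|) = (∑ j, |v j|) := by
        rw [habs_split vP hvPo, haP1, haP2]; ring
      have hl1M : (∑ j, |vM j|) = (∑ j, |v j|) := by
        rw [habs_split vM hvMo, haM1, haM2]; ring
      -- partial-count decrease
      have hsubP : (Finset.univ.filter (fun j => 0 < |vP j| ∧ |vP j| < α)).card ≤ p := by
        rcases min_cases (α - |v j₁|) |v j₂| with ⟨hmin, _⟩ | ⟨hmin, _⟩
        · -- eP = α - |v j₁|, so j₁ saturates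
          have hmin' : eP = α - |v j₁| := hePdef.trans hmin
          have hsub : (Finset.univ.filter (fun j => 0 < |vP j| ∧ |vP j| < α)) ⊆ Pt.erase j₁ := by
            intro j hj
            simp only [Finset.mem_filter, Finset.mem_univ, true_and] at hj
            by_cases h1 : j = j₁
            · exfalso; rw [h1, haP1, hmin'] at hj; linarith [hj.2]
            by_cases h2 : j = j₂
            · rw [h2]; exact Finset.mem_erase.mpr ⟨Ne.symm hne, hj₂⟩
            · refine Finset.mem_erase.mpr ⟨h1, ?_⟩
              rw [hvPo j h1 h2] at hj
              simpa [hPtdef] using hj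
          calc _ ≤ (Pt.erase j₁).card := Finset.card_le_card hsub
          _ = Pt.card - 1 := Finset.card_erase_of_mem hj₁
          _ ≤ p := by omega
        · -- eP = |v j₂|, so j₂ vanishes
          have hmin' : eP = |v j₂| := hePdef.trans hmin
          have hsub : (Finset.univ.filter (fun j => 0 < |vP j| ∧ |vP j| < α)) ⊆ Pt.erase j₂ := by
            intro j hj
            simp only [Finset.mem_filter, Finset.mem_univ, true_and] at hj
            by_cases h2 : j = j₂
            · exfalso; rw [h2, haP2, hmin'] at hj; linarith [hj.1]
            by_cases h1 : j = j₁
            · rw [h1]; exact Finset.mem_erase.mpr ⟨hne, hj₁⟩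
            · refine Finset.mem_erase.mpr ⟨h2, ?_⟩
              rw [hvPo j h1 h2] at hj
              simpa [hPtdef] using hj
          calc _ ≤ (Pt.erase j₂).card := Finset.card_le_card hsub
          _ = Pt.card - 1 := Finset.card_erase_of_mem hj₂
          _ ≤ p := by omega
      have hsubM : (Finset.univ.filter (fun j => 0 < |vM j| ∧ |vM j| < α)).card ≤ p := by
        rcases min_cases (|v j₁|) (α - |v j₂|) with ⟨hmin, _⟩ | ⟨hmin, _⟩
        · have hmin' : eM = |v j₁| := heMdef.trans hmin
          have hsub : (Finset.univ.filter (fun j => 0 < |vM j| ∧ |vM j| < α)) ⊆ Pt.erase j₁ := by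
            intro j hj
            simp only [Finset.mem_filter, Finset.mem_univ, true_and] at hj
            by_cases h1 : j = j₁
            · exfalso; rw [h1, haM1, hmin'] at hj; linarith [hj.1]
            by_cases h2 : j = j₂
            · rw [h2]; exact Finset.mem_erase.mpr ⟨Ne.symm hne, hj₂⟩
            · refine Finset.mem_erase.mpr ⟨h1, ?_⟩
              rw [hvMo j h1 h2] at hj
              simpa [hPtdef] using hj
          calc _ ≤ (Pt.erase j₁).card := Finset.card_le_card hsub
          _ = Pt.card - 1 := Finset.card_erase_of_mem hj₁
          _ ≤ p := by omega
        · have hmin' : eM = α - |v j₂| := heMdef.trans hmin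
          have hsub : (Finset.univ.filter (fun j => 0 < |vM j| ∧ |vM j| < α)) ⊆ Pt.erase j₂ := by
            intro j hj
            simp only [Finset.mem_filter, Finset.mem_univ, true_and] at hj
            by_cases h2 : j = j₂
            · exfalso; rw [h2, haM2, hmin'] at hj; linarith [hj.2]
            by_cases h1 : j = j₁
            · rw [h1]; exact Finset.mem_erase.mpr ⟨hne, hj₁⟩
            · refine Finset.mem_erase.mpr ⟨h2, ?_⟩
              rw [hvMo j h1 h2] at hj
              simpa [hPtdef] using hj
          calc _ ≤ (Pt.erase j₂).card := Finset.card_le_card hsub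
          _ = Pt.card - 1 := Finset.card_erase_of_mem hj₂
          _ ≤ p := by omega
      -- recurse
      obtain ⟨k₁, lam₁, u₁, hl₁0, hl₁s, hrep₁, hsp₁, hbd₁, hsupp₁⟩ :=
        ih vP hsubP hbdP (by rw [hl1P]; exact hl1)
      obtain ⟨k₂, lam₂, u₂, hl₂0, hl₂s, hrep₂, hsp₂, hbd₂, hsupp₂⟩ :=
        ih vM hsubM hbdM (by rw [hl1M]; exact hl1)
      set cP := eM / (eP + eM) with hcPdef
      set cM := eP / (eP + eM) with hcMdef
      have hsumE : 0 < eP + eM := by linarith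
      have hcP : 0 ≤ cP := div_nonneg heM.le hsumE.le
      have hcM : 0 ≤ cM := div_nonneg heP.le hsumE.le
      have hcsum : cP + cM = 1 := by
        rw [hcPdef, hcMdef, ← add_div, add_comm eM eP, div_self hsumE.ne']
      have hcomb : ∀ j, v j = cP * vP j + cM * vM j := by
        intro j
        by_cases h1 : j = j₁
        · rw [h1]
          simp only [hvPdef, hvMdef, if_pos rfl, hcPdef, hcMdef]
          field_simp
          ring
        by_cases h2 : j = j₂
        · rw [h2]
          simp only [hvPdef, hvMdef, if_neg (Ne.symm hne), if_pos rfl, hcPdef, hcMdef, ↓reduceIte]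
          field_simp
          ring
        · rw [hvPo j h1 h2, hvMo j h1 h2, ← add_mul, hcsum, one_mul]
      refine ⟨k₁ + k₂, Fin.append (fun i => cP * lam₁ i) (fun i => cM * lam₂ i),
        Fin.append u₁ u₂, ?_, ?_, ?_, ?_, ?_, ?_⟩
      · intro i
        refine Fin.addCases (fun i => ?_) (fun i => ?_) i
        · simp only [Fin.append_left]; exact mul_nonneg hcP (hl₁0 i)
        · simp only [Fin.append_right]; exact mul_nonneg hcM (hl₂0 i)
      · rw [Fin.sum_univ_add]
        simp only [Fin.append_left, Fin.append_right]
        rw [← Finset.mul_sum, ← Finset.mul_sum, hl₁s, hl₂s]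
        simpa using hcsum
      · intro j
        rw [Fin.sum_univ_add]
        simp only [Fin.append_left, Fin.append_right]
        have : ∀ (c : ℝ) (lam : Fin k₁ → ℝ), True := fun _ _ => trivial
        rw [show (∑ i : Fin k₁, cP * lam₁ i * u₁ i j) = cP * ∑ i : Fin k₁, lam₁ i * u₁ i j by
            rw [Finset.mul_sum]; exact Finset.sum_congr rfl (fun i _ => by ring)]
        rw [show (∑ i : Fin k₂, cM * lam₂ i * u₂ i j) = cM * ∑ i : Fin k₂, lam₂ i * u₂ i j by
            rw [Finset.mul_sum]; exact Finset.sum_congr rfl (fun i _ => by ring)]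
        rw [← hrep₁ j, ← hrep₂ j]
        exact hcomb j
      · intro i
        refine Fin.addCases (fun i => ?_) (fun i => ?_) i
        · simp only [Fin.append_left]; exact hsp₁ i
        · simp only [Fin.append_right]; exact hsp₂ i
      · intro i
        refine Fin.addCases (fun i => ?_) (fun i => ?_) i
        · simp only [Fin.append_left]; exact hbd₁ i
        · simp only [Fin.append_right]; exact hbd₂ i
      · intro i
        refine Fin.addCases (fun i => ?_) (fun i => ?_) i <;> intro j hvj
        · simp only [Fin.append_left]
          refine hsupp₁ i j ?_
          have h1 : j ≠ j₁ := fun h => hv₁ (h ▸ hvj)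
          have h2 : j ≠ j₂ := fun h => hv₂ (h ▸ hvj)
          rw [hvPo j h1 h2]; exact hvj
        · simp only [Fin.append_right]
          refine hsupp₂ i j ?_
          have h1 : j ≠ j₁ := fun h => hv₁ (h ▸ hvj)
          have h2 : j ≠ j₂ := fun h => hv₂ (h ▸ hvj)
          rw [hvMo j h1 h2]; exact hvj


lemma top_set {n : ℕ} (s : ℕ) (h : Fin n → ℝ) :
    ∃ T : Finset (Fin n), T.card ≤ s ∧
      (∀ S : Finset (Fin n), S.card ≤ s → ∑ i ∈ S, |h i| ≤ ∑ i ∈ T, |h i|) ∧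
      (∀ i ∉ T, (s : ℝ) * |h i| ≤ ∑ j ∈ T, |h j|) := by
  classical
  set F := (Finset.univ : Finset (Fin n)).powerset.filter (fun T => T.card ≤ s) with hF
  have hFne : F.Nonempty := ⟨∅, by simp [hF]⟩
  obtain ⟨T, hTF, hTmax⟩ := F.exists_max_image (fun T => ∑ i ∈ T, |h i|) hFne
  have hTcard : T.card ≤ s := (Finset.mem_filter.mp hTF).2
  refine ⟨T, hTcard, fun S hS => hTmax S (by simp [hF, hS]), ?_⟩
  intro i hi
  rcases lt_or_eq_of_le hTcard with hlt | heq
  · -- T.card < s : then h i = 0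
    have hins : insert i T ∈ F := by
      simp only [hF, Finset.mem_filter, Finset.mem_powerset]
      exact ⟨Finset.subset_univ _, by rw [Finset.card_insert_of_notMem hi]; omega⟩
    have := hTmax _ hins
    rw [Finset.sum_insert hi] at this
    have h0 : |h i| ≤ 0 := by linarith
    have h0' : |h i| = 0 := le_antisymm h0 (abs_nonneg _)
    rw [h0', mul_zero]
    exact Finset.sum_nonneg (fun j _ => abs_nonneg _)
  · -- T.card = s
    rcases Nat.eq_zero_or_pos s with rfl | hs
    · simp only [Nat.cast_zero, zero_mul]
      exact Finset.sum_nonneg (fun j _ => abs_nonneg _)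
    have hTne : T.Nonempty := by
      rw [← Finset.card_pos, ← heq] at *; omega
    obtain ⟨j, hjT, hjmin⟩ := T.exists_min_image (fun j => |h j|) hTne
    -- swap: |h i| ≤ |h j|
    have hswap : |h i| ≤ |h j| := by
      have hiTe : i ∉ T.erase j := fun hmem => hi (Finset.mem_of_mem_erase hmem)
      have hins : insert i (T.erase j) ∈ F := by
        simp only [hF, Finset.mem_filter, Finset.mem_powerset]
        refine ⟨Finset.subset_univ _, ?_⟩
        rw [Finset.card_insert_of_notMem hiTe, Finset.card_erase_of_mem hjT]
        omega
      have hle := hTmax _ hins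
      rw [Finset.sum_insert hiTe] at hle
      have herase : ∑ x ∈ T.erase j, |h x| = (∑ x ∈ T, |h x|) - |h j| := by
        rw [← Finset.sum_erase_add T _ hjT]; ring
      rw [herase] at hle
      linarith
    -- min ≤ average: s * |h j| ≤ ∑_T |h|
    have havg : (T.card : ℝ) * |h j| ≤ ∑ x ∈ T, |h x| := by
      calc (T.card : ℝ) * |h j| = ∑ _x ∈ T, |h j| := by rw [Finset.sum_const]; simp [mul_comm]
      _ ≤ ∑ x ∈ T, |h x| := Finset.sum_le_sum (fun x hx => hjmin x hx)
    rw [heq] at havg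
    calc (s:ℝ) * |h i| ≤ (s:ℝ) * |h j| := by
          apply mul_le_mul_of_nonneg_left hswap (by positivity)
    _ ≤ ∑ x ∈ T, |h x| := havg



lemma final_contra (δ r P Qs : ℝ) (hδ0 : 0 ≤ δ) (hδ : r * δ < 1) (hr2 : r^2 = 2)
    (hr0 : 0 ≤ r) (hP0 : 0 < P) (hQs0 : 0 ≤ Qs) (hQsP : Qs ≤ P)
    (Hmain : (1-δ)*(P + (r-1)^2*Qs) ≤ (1+δ)*((r-1)^2*Qs + (3-2*r)^2*P)) : False := by
  have hr1 : 1 < r := by nlinarith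
  have hr15 : r < 3/2 := by nlinarith
  have h1 : 2*δ*(r-1)^2*Qs ≤ 2*δ*(r-1)^2*P := by
    apply mul_le_mul_of_nonneg_left hQsP
    positivity
  have hKP : ((1-δ) - (1+δ)*(3-2*r)^2 - 2*δ*(r-1)^2) * P ≤ 0 := by nlinarith
  have hK : (1-δ) - (1+δ)*(3-2*r)^2 - 2*δ*(r-1)^2 ≤ 0 := by nlinarith [hKP, hP0]
  have hstep : r ≤ 2*δ := by nlinarith [hK, hr2, hr15, hδ0]
  nlinarith [hstep, hδ, hr2, hr1]

lemma sum_sq_comb {m : ℕ} (f g : Fin m → ℝ) (a b : ℝ) :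
    ∑ j, (a * f j + b * g j)^2
      = a^2 * (∑ j, f j^2) + (2*a*b) * (∑ j, f j * g j) + b^2 * (∑ j, g j ^2) := by
  rw [Finset.mul_sum, Finset.mul_sum, Finset.mul_sum, ← Finset.sum_add_distrib,
    ← Finset.sum_add_distrib]
  exact Finset.sum_congr rfl (fun j _ => by ring)

set_option maxHeartbeats 1000000 in
lemma nsp {m n : ℕ} (s : ℕ) (A : Matrix (Fin m) (Fin n) ℝ) (δ : ℝ)
    (hδ0 : 0 ≤ δ) (hδ : Real.sqrt 2 * δ < 1)
    (hRIP : ∀ z : Fin n → ℝ, IsSparse (2 * s) z →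
      (1 - δ) * ∑ i, z i ^ 2 ≤ ∑ i, (A *ᵥ z) i ^ 2 ∧
      ∑ i, (A *ᵥ z) i ^ 2 ≤ (1 + δ) * ∑ i, z i ^ 2)
    (h : Fin n → ℝ) (hh : A *ᵥ h = 0) (hne : h ≠ 0)
    (S : Finset (Fin n)) (hS : S.card ≤ s) :
    ∑ i ∈ S, |h i| < ∑ i ∈ Sᶜ, |h i| := by
  classical
  by_contra hcon
  push_neg at hcon
  -- total l1 norm is positive
  have hl1pos : 0 < ∑ i, |h i| := by
    obtain ⟨j, hj⟩ := Function.ne_iff.mp hne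
    have h1 : 0 < |h j| := abs_pos.mpr hj
    have h2 : |h j| ≤ ∑ i, |h i| :=
      Finset.single_le_sum (fun i _ => abs_nonneg (h i)) (Finset.mem_univ j)
    linarith
  have htot : ∑ i ∈ S, |h i| + ∑ i ∈ Sᶜ, |h i| = ∑ i, |h i| :=
    Finset.sum_add_sum_compl S _
  rcases Nat.eq_zero_or_pos s with rfl | hs
  · have : S = ∅ := Finset.card_eq_zero.mp (Nat.le_zero.mp hS)
    subst this
    rw [Finset.sum_empty] at hcon
    rw [Finset.sum_empty, zero_add] at htot
    rw [htot] at hcon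
    linarith
  have hs' : (0:ℝ) < s := by exact_mod_cast hs
  obtain ⟨T, hTcard, hTmax, hTavg⟩ := top_set s h
  set M := ∑ j ∈ T, |h j| with hMdef
  have hMS : ∑ i ∈ S, |h i| ≤ M := hTmax S hS
  have htotT : ∑ i ∈ T, |h i| + ∑ i ∈ Tᶜ, |h i| = ∑ i, |h i| :=
    Finset.sum_add_sum_compl T _
  have hTc : ∑ i ∈ Tᶜ, |h i| ≤ M := by
    have h1 : ∑ i ∈ Tᶜ, |h i| = (∑ i, |h i|) - M := by rw [← htotT]; ring
    have h2 : ∑ i ∈ Sᶜ, |h i| = (∑ i, |h i|) - ∑ i ∈ S, |h i| := by rw [← htot]; ring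
    have : ∑ i ∈ Tᶜ, |h i| ≤ ∑ i ∈ Sᶜ, |h i| := by rw [h1, h2]; linarith
    linarith [hcon, hMS]
  have hM0 : 0 < M := by
    have : ∑ i ∈ Sᶜ, |h i| ≤ M := le_trans hcon hMS
    linarith
  set α := M / s with hαdef
  have hα0 : 0 < α := div_pos hM0 hs'
  -- split h into x (on T) and w (off T)
  set x : Fin n → ℝ := fun i => if i ∈ T then h i else 0 with hxdef
  set w : Fin n → ℝ := fun i => if i ∈ T then 0 else h i with hwdef
  have hxw : (x + w) = h := by
    funext i; by_cases hi : i ∈ T <;> simp [hxdef, hwdef, hi]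
  have hAadd : A *ᵥ x + A *ᵥ w = 0 := by rw [← Matrix.mulVec_add, hxw, hh]
  have hAw : ∀ j0, (A *ᵥ w) j0 = -((A *ᵥ x) j0) := by
    intro j0
    have := congrFun hAadd j0
    simp only [Pi.add_apply, Pi.zero_apply] at this
    linarith
  -- bounds on w
  have hwbd : ∀ j, |w j| ≤ α := by
    intro j
    by_cases hj : j ∈ T
    · simp [hwdef, hj]; positivity
    · simp only [hwdef, if_neg hj]
      have := hTavg j hj
      rw [hαdef, le_div_iff₀ hs']
      linarith [this]
  have hwl1 : (∑ j, |w j|) ≤ s * α := by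
    have hsplit : ∑ j, |w j| = ∑ j ∈ T, |w j| + ∑ j ∈ Tᶜ, |w j| :=
      (Finset.sum_add_sum_compl T _).symm
    have h1 : ∑ j ∈ T, |w j| = 0 :=
      Finset.sum_eq_zero (fun j hj => by simp [hwdef, hj])
    have h2 : ∑ j ∈ Tᶜ, |w j| = ∑ j ∈ Tᶜ, |h j| :=
      Finset.sum_congr rfl (fun j hj => by
        simp [hwdef, (Finset.mem_compl.mp hj)])
    have hsα : (s:ℝ) * α = M := by rw [hαdef]; field_simp
    rw [hsplit, h1, h2, hsα]; linarith
  -- apply polytope decomposition to w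
  obtain ⟨k, lam, u, hl0, hl1s, hrep, hsp, hubd, hsupp⟩ :=
    polytope s α hα0.le _ w le_rfl hwbd hwl1
  -- constants
  set r := Real.sqrt 2 with hrdef
  have hr2 : r^2 = 2 := Real.sq_sqrt (by norm_num)
  have hr0 : 0 ≤ r := Real.sqrt_nonneg 2
  have hr1 : 1 < r := by
    rw [hrdef]
    have h1 : Real.sqrt 1 < Real.sqrt 2 := Real.sqrt_lt_sqrt (by norm_num) (by norm_num)
    simpa using h1
  have hr15 : r < 3/2 := by
    rw [hrdef]
    have h1 : Real.sqrt 2 < Real.sqrt (9/4) := Real.sqrt_lt_sqrt (by norm_num) (by norm_num)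
    have h2 : Real.sqrt (9/4) = 3/2 := by
      rw [show (9/4:ℝ) = (3/2)^2 by norm_num, Real.sqrt_sq (by norm_num)]
    linarith
  set t := r - 1 with htdef
  set c := 3 - 2*r with hcdef
  have ht0 : 0 < t := by rw [htdef]; linarith
  have hc0 : 0 < c := by rw [hcdef]; linarith
  -- x data
  have hxT : ∀ i ∉ T, x i = 0 := fun i hi => by simp [hxdef, hi]
  set P := ∑ j, x j ^2 with hPdef
  have hPT : P = ∑ j ∈ T, h j ^2 := by
    rw [hPdef, ← Finset.sum_add_sum_compl T]
    have h1 : ∑ j ∈ T, x j ^2 = ∑ j ∈ T, h j ^2 :=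
      Finset.sum_congr rfl (fun j hj => by simp [hxdef, hj])
    have h2 : ∑ j ∈ Tᶜ, x j ^2 = 0 :=
      Finset.sum_eq_zero (fun j hj => by
        simp [hxdef, (Finset.mem_compl.mp hj)])
    rw [h1, h2, add_zero]
  have hPM : M^2 ≤ s * P := by
    have hcs := Finset.sum_mul_sq_le_sq_mul_sq T (fun _ => (1:ℝ)) (fun j => |h j|)
    simp only [one_pow, one_mul, Finset.sum_const, nsmul_eq_mul, mul_one, sq_abs] at hcs
    have hcard : (T.card : ℝ) ≤ s := by exact_mod_cast hTcard
    rw [hPT]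
    have hTsum : (0:ℝ) ≤ ∑ j ∈ T, h j^2 := Finset.sum_nonneg (fun j _ => sq_nonneg _)
    calc M^2 ≤ (T.card : ℝ) * ∑ j ∈ T, h j ^2 := hcs
    _ ≤ s * ∑ j ∈ T, h j ^2 := mul_le_mul_of_nonneg_right hcard hTsum
  have hP0 : 0 < P := by
    have h1 : (s:ℝ) * 0 < s * P := by
      rw [mul_zero]
      exact lt_of_lt_of_le (by positivity) hPM
    exact (mul_lt_mul_iff_right₀ hs').mp h1
  have hsαP : (s:ℝ) * α^2 ≤ P := by
    have : (s:ℝ) * α^2 = M^2 / s := by rw [hαdef]; field_simp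
    rw [this, div_le_iff₀ hs']
    linarith [hPM]
  -- per-component data
  set Q : Fin k → ℝ := fun i => ∑ j, u i j ^2 with hQdef
  have hQ0 : ∀ i, 0 ≤ Q i := fun i => Finset.sum_nonneg (fun j _ => sq_nonneg _)
  have hQbd : ∀ i, Q i ≤ s * α^2 := by
    intro i
    obtain ⟨U, hU, hUz⟩ := hsp i
    have hsplit : Q i = ∑ j ∈ U, u i j ^2 + ∑ j ∈ Uᶜ, u i j ^2 :=
      (Finset.sum_add_sum_compl U _).symm
    have h2 : ∑ j ∈ Uᶜ, u i j ^2 = 0 :=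
      Finset.sum_eq_zero (fun j hj => by rw [hUz j (Finset.mem_compl.mp hj)]; ring)
    have h1 : ∑ j ∈ U, u i j ^2 ≤ ∑ j ∈ U, α^2 := by
      refine Finset.sum_le_sum (fun j _ => ?_)
      have hb := abs_le.mp (hubd i j)
      exact sq_le_sq' hb.1 hb.2
    have hcard : (U.card : ℝ) ≤ s := by exact_mod_cast hU
    rw [hsplit, h2, add_zero]
    calc ∑ j ∈ U, u i j ^2 ≤ ∑ j ∈ U, α^2 := h1
    _ = (U.card : ℝ) * α^2 := by rw [Finset.sum_const]; simp [mul_comm]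
    _ ≤ s * α^2 := mul_le_mul_of_nonneg_right hcard (sq_nonneg _)
  have hdisj : ∀ i j, x j * u i j = 0 := by
    intro i j
    by_cases hj : j ∈ T
    · have hwj : w j = 0 := by simp [hwdef, hj]
      rw [hsupp i j hwj, mul_zero]
    · rw [hxT j hj, zero_mul]
  -- the two test vector families
  set pv : Fin k → Fin n → ℝ := fun i j => x j + t * u i j with hpvdef
  set qv : Fin k → Fin n → ℝ := fun i j => t * u i j - c * x j with hqvdef
  have hpsp : ∀ i, IsSparse (2*s) (pv i) := by
    intro i
    obtain ⟨U, hU, hUz⟩ := hsp i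
    refine ⟨T ∪ U, ?_, fun j hj => ?_⟩
    · calc (T ∪ U).card ≤ T.card + U.card := Finset.card_union_le _ _
      _ ≤ 2 * s := by omega
    · have hjT : j ∉ T := fun hmem => hj (Finset.mem_union_left _ hmem)
      have hjU : j ∉ U := fun hmem => hj (Finset.mem_union_right _ hmem)
      simp [hpvdef, hxT j hjT, hUz j hjU]
  have hqsp : ∀ i, IsSparse (2*s) (qv i) := by
    intro i
    obtain ⟨U, hU, hUz⟩ := hsp i
    refine ⟨T ∪ U, ?_, fun j hj => ?_⟩
    · calc (T ∪ U).card ≤ T.card + U.card := Finset.card_union_le _ _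
      _ ≤ 2 * s := by omega
    · have hjT : j ∉ T := fun hmem => hj (Finset.mem_union_left _ hmem)
      have hjU : j ∉ U := fun hmem => hj (Finset.mem_union_right _ hmem)
      simp [hqvdef, hxT j hjT, hUz j hjU]
  -- norms of test vectors
  have hpnorm : ∀ i, ∑ j, pv i j ^2 = P + t^2 * Q i := by
    intro i
    have : ∀ j, pv i j ^2 = x j^2 + t^2 * u i j^2 := by
      intro j
      have hd := hdisj i j
      simp only [hpvdef]
      linear_combination (2*t) * hd
    rw [Finset.sum_congr rfl (fun j _ => this j), Finset.sum_add_distrib, ← Finset.mul_sum]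
  have hqnorm : ∀ i, ∑ j, qv i j ^2 = t^2 * Q i + c^2 * P := by
    intro i
    have : ∀ j, qv i j ^2 = t^2 * u i j^2 + c^2 * x j^2 := by
      intro j
      have hd := hdisj i j
      simp only [hqvdef]
      linear_combination (-2*t*c) * hd
    rw [Finset.sum_congr rfl (fun j _ => this j), Finset.sum_add_distrib, ← Finset.mul_sum,
      ← Finset.mul_sum]
  -- mulVec linearity
  have hmvp : ∀ i j0, (A *ᵥ pv i) j0 = 1 * (A *ᵥ x) j0 + t * (A *ᵥ u i) j0 := by
    intro i j0
    simp only [Matrix.mulVec, dotProduct, hpvdef]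
    rw [Finset.mul_sum, Finset.mul_sum, ← Finset.sum_add_distrib]
    exact Finset.sum_congr rfl (fun l _ => by ring)
  have hmvq : ∀ i j0, (A *ᵥ qv i) j0 = (-c) * (A *ᵥ x) j0 + t * (A *ᵥ u i) j0 := by
    intro i j0
    simp only [Matrix.mulVec, dotProduct, hqvdef]
    rw [Finset.mul_sum, Finset.mul_sum, ← Finset.sum_add_distrib]
    exact Finset.sum_congr rfl (fun l _ => by ring)
  set N := ∑ j0, (A *ᵥ x) j0 ^2 with hNdef
  set C : Fin k → ℝ := fun i => ∑ j0, (A *ᵥ x) j0 * (A *ᵥ u i) j0 with hCdef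
  set R : Fin k → ℝ := fun i => ∑ j0, (A *ᵥ u i) j0 ^2 with hRdef
  have hBp : ∀ i, ∑ j0, (A *ᵥ pv i) j0 ^2 = N + 2*t*(C i) + t^2*(R i) := by
    intro i
    rw [Finset.sum_congr rfl (fun j0 _ => by rw [hmvp i j0])]
    rw [sum_sq_comb]
    simp only [hNdef, hCdef, hRdef]
    ring
  have hBq : ∀ i, ∑ j0, (A *ᵥ qv i) j0 ^2 = c^2*N - 2*t*c*(C i) + t^2*(R i) := by
    intro i
    rw [Finset.sum_congr rfl (fun j0 _ => by rw [hmvq i j0])]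
    rw [sum_sq_comb]
    simp only [hNdef, hCdef, hRdef]
    ring
  -- the key cancellation : ∑ lam C = -N
  have hAu : ∀ j0, ∑ i, lam i * (A *ᵥ u i) j0 = (A *ᵥ w) j0 := by
    intro j0
    simp only [Matrix.mulVec, dotProduct]
    calc ∑ i, lam i * ∑ l, A j0 l * u i l
        = ∑ i, ∑ l, A j0 l * (lam i * u i l) := by
          refine Finset.sum_congr rfl (fun i _ => ?_)
          rw [Finset.mul_sum]
          exact Finset.sum_congr rfl (fun l _ => by ring)
      _ = ∑ l, ∑ i, A j0 l * (lam i * u i l) := Finset.sum_comm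
      _ = ∑ l, A j0 l * w l := by
          refine Finset.sum_congr rfl (fun l _ => ?_)
          rw [← Finset.mul_sum, ← hrep l]
  have hCsum : ∑ i, lam i * C i = -N := by
    calc ∑ i, lam i * C i
        = ∑ i, ∑ j0, (A *ᵥ x) j0 * (lam i * (A *ᵥ u i) j0) := by
          refine Finset.sum_congr rfl (fun i _ => ?_)
          simp only [hCdef]
          rw [Finset.mul_sum]
          exact Finset.sum_congr rfl (fun j0 _ => by ring)
      _ = ∑ j0, ∑ i, (A *ᵥ x) j0 * (lam i * (A *ᵥ u i) j0) := Finset.sum_comm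
      _ = ∑ j0, (A *ᵥ x) j0 * (A *ᵥ w) j0 := by
          refine Finset.sum_congr rfl (fun j0 _ => ?_)
          rw [← Finset.mul_sum, hAu j0]
      _ = -N := by
          rw [hNdef, ← Finset.sum_neg_distrib]
          exact Finset.sum_congr rfl (fun j0 _ => by rw [hAw j0]; ring)
  -- RIP estimates, weighted and summed
  have hlow : ∀ i, (1-δ)*(P + t^2*(Q i)) ≤ N + 2*t*(C i) + t^2*(R i) := by
    intro i
    have := (hRIP (pv i) (hpsp i)).1
    rw [hpnorm i, hBp i] at this
    exact this
  have hup : ∀ i, c^2*N - 2*t*c*(C i) + t^2*(R i) ≤ (1+δ)*(t^2*(Q i) + c^2*P) := by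
    intro i
    have := (hRIP (qv i) (hqsp i)).2
    rw [hqnorm i, hBq i] at this
    exact this
  set Qs := ∑ i, lam i * Q i with hQsdef
  set Rs := ∑ i, lam i * R i with hRsdef
  have hsum1 : ∑ i, lam i * ((1-δ)*(P + t^2*(Q i))) = (1-δ)*(P + t^2*Qs) := by
    calc ∑ i, lam i * ((1-δ)*(P + t^2*(Q i)))
        = ∑ i, ((1-δ)*P * lam i + (1-δ)*t^2*(lam i * Q i)) :=
          Finset.sum_congr rfl (fun i _ => by ring)
      _ = (1-δ)*P * (∑ i, lam i) + (1-δ)*t^2*Qs := by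
          rw [Finset.sum_add_distrib, ← Finset.mul_sum, ← Finset.mul_sum]
      _ = (1-δ)*(P + t^2*Qs) := by rw [hl1s]; ring
  have hsum2 : ∑ i, lam i * (N + 2*t*(C i) + t^2*(R i)) = N + 2*t*(-N) + t^2*Rs := by
    calc ∑ i, lam i * (N + 2*t*(C i) + t^2*(R i))
        = ∑ i, (N * lam i + 2*t*(lam i * C i) + t^2*(lam i * R i)) :=
          Finset.sum_congr rfl (fun i _ => by ring)
      _ = N * (∑ i, lam i) + 2*t*(∑ i, lam i * C i) + t^2*Rs := by
          rw [Finset.sum_add_distrib, Finset.sum_add_distrib, ← Finset.mul_sum,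
            ← Finset.mul_sum, ← Finset.mul_sum]
      _ = N + 2*t*(-N) + t^2*Rs := by rw [hl1s, hCsum]; ring
  have hsum3 : ∑ i, lam i * (c^2*N - 2*t*c*(C i) + t^2*(R i))
      = c^2*N - 2*t*c*(-N) + t^2*Rs := by
    calc ∑ i, lam i * (c^2*N - 2*t*c*(C i) + t^2*(R i))
        = ∑ i, (c^2*N * lam i - 2*t*c*(lam i * C i) + t^2*(lam i * R i)) :=
          Finset.sum_congr rfl (fun i _ => by ring)
      _ = c^2*N * (∑ i, lam i) - 2*t*c*(∑ i, lam i * C i) + t^2*Rs := by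
          rw [Finset.sum_add_distrib, Finset.sum_sub_distrib, ← Finset.mul_sum,
            ← Finset.mul_sum, ← Finset.mul_sum]
      _ = c^2*N - 2*t*c*(-N) + t^2*Rs := by rw [hl1s, hCsum]; ring
  have hsum4 : ∑ i, lam i * ((1+δ)*(t^2*(Q i) + c^2*P)) = (1+δ)*(t^2*Qs + c^2*P) := by
    calc ∑ i, lam i * ((1+δ)*(t^2*(Q i) + c^2*P))
        = ∑ i, ((1+δ)*t^2*(lam i * Q i) + (1+δ)*c^2*P * lam i) :=
          Finset.sum_congr rfl (fun i _ => by ring)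
      _ = (1+δ)*t^2*Qs + (1+δ)*c^2*P * (∑ i, lam i) := by
          rw [Finset.sum_add_distrib, ← Finset.mul_sum, ← Finset.mul_sum]
      _ = (1+δ)*(t^2*Qs + c^2*P) := by rw [hl1s]; ring
  have hmid : N + 2*t*(-N) + t^2*Rs = c^2*N - 2*t*c*(-N) + t^2*Rs := by
    rw [htdef, hcdef]; ring
  have Hmain : (1-δ)*(P + t^2*Qs) ≤ (1+δ)*(t^2*Qs + c^2*P) := by
    calc (1-δ)*(P + t^2*Qs)
        = ∑ i, lam i * ((1-δ)*(P + t^2*(Q i))) := hsum1.symm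
      _ ≤ ∑ i, lam i * (N + 2*t*(C i) + t^2*(R i)) :=
          Finset.sum_le_sum (fun i _ => mul_le_mul_of_nonneg_left (hlow i) (hl0 i))
      _ = N + 2*t*(-N) + t^2*Rs := hsum2
      _ = c^2*N - 2*t*c*(-N) + t^2*Rs := hmid
      _ = ∑ i, lam i * (c^2*N - 2*t*c*(C i) + t^2*(R i)) := hsum3.symm
      _ ≤ ∑ i, lam i * ((1+δ)*(t^2*(Q i) + c^2*P)) :=
          Finset.sum_le_sum (fun i _ => mul_le_mul_of_nonneg_left (hup i) (hl0 i))
      _ = (1+δ)*(t^2*Qs + c^2*P) := hsum4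
  -- final arithmetic contradiction
  have hQs0 : 0 ≤ Qs :=
    Finset.sum_nonneg (fun i _ => mul_nonneg (hl0 i) (hQ0 i))
  have hQsP : Qs ≤ P := by
    have h1 : Qs ≤ ∑ i, lam i * (s * α^2) :=
      Finset.sum_le_sum (fun i _ => mul_le_mul_of_nonneg_left (hQbd i) (hl0 i))
    have h2 : ∑ i, lam i * ((s:ℝ) * α^2) = (s:ℝ) * α^2 := by
      rw [← Finset.sum_mul, hl1s, one_mul]
    linarith [hsαP]
  rw [htdef, hcdef] at Hmain
  exact final_contra δ r P Qs hδ0 hδ hr2 hr0 hP0 hQs0 hQsP Hmain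




/-- If `A` satisfies the RIP of order `2s` with constant `δ < 1/√2`, then every `s`-sparse
vector `v` is the unique minimizer of the ℓ¹ norm among all `z` with `A z = A v`. -/
theorem stmt2 {m n : ℕ} (s : ℕ) (A : Matrix (Fin m) (Fin n) ℝ) (δ : ℝ)
    (hδ : δ < 1 / Real.sqrt 2)
    (hRIP : ∀ z : Fin n → ℝ, IsSparse (2 * s) z →
      (1 - δ) * ∑ i, z i ^ 2 ≤ ∑ i, (A *ᵥ z) i ^ 2 ∧
      ∑ i, (A *ᵥ z) i ^ 2 ≤ (1 + δ) * ∑ i, z i ^ 2) :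
    ∀ v : Fin n → ℝ, IsSparse s v →
      (∀ z : Fin n → ℝ, A *ᵥ z = A *ᵥ v → l1norm v ≤ l1norm z) ∧
      (∀ z : Fin n → ℝ, A *ᵥ z = A *ᵥ v → l1norm z ≤ l1norm v → z = v) := by
  intro v hv
  set δ' := max δ 0 with hδ'def
  have hδ'0 : 0 ≤ δ' := le_max_right _ _
  have hsqrt2 : 0 < Real.sqrt 2 := Real.sqrt_pos.mpr (by norm_num)
  have hδ' : Real.sqrt 2 * δ' < 1 := by
    rcases max_cases δ 0 with ⟨heq, _⟩ | ⟨heq, _⟩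
    · rw [hδ'def, heq, mul_comm, ← lt_div_iff₀ hsqrt2]
      exact hδ
    · rw [hδ'def, heq, mul_zero]; norm_num
  have hδle : δ ≤ δ' := le_max_left _ _
  have hRIP' : ∀ z : Fin n → ℝ, IsSparse (2 * s) z →
      (1 - δ') * ∑ i, z i ^ 2 ≤ ∑ i, (A *ᵥ z) i ^ 2 ∧
      ∑ i, (A *ᵥ z) i ^ 2 ≤ (1 + δ') * ∑ i, z i ^ 2 := by
    intro z hz
    obtain ⟨h1, h2⟩ := hRIP z hz
    have hzsq : (0:ℝ) ≤ ∑ i, z i ^ 2 := Finset.sum_nonneg (fun i _ => sq_nonneg _)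
    constructor
    · calc (1 - δ') * ∑ i, z i ^ 2 ≤ (1 - δ) * ∑ i, z i ^ 2 :=
            mul_le_mul_of_nonneg_right (by linarith) hzsq
      _ ≤ _ := h1
    · calc ∑ i, (A *ᵥ z) i ^ 2 ≤ (1 + δ) * ∑ i, z i ^ 2 := h2
      _ ≤ (1 + δ') * ∑ i, z i ^ 2 := mul_le_mul_of_nonneg_right (by linarith) hzsq
  obtain ⟨S, hScard, hSz⟩ := hv
  -- key NSP-based estimate
  have key : ∀ z : Fin n → ℝ, A *ᵥ z = A *ᵥ v → z ≠ v → l1norm v < l1norm z := by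
    intro z hz hzv
    set g : Fin n → ℝ := z - v with hgdef
    have hg0 : A *ᵥ g = 0 := by
      rw [hgdef, Matrix.mulVec_sub, hz, sub_self]
    have hgne : g ≠ 0 := by
      rw [hgdef, sub_ne_zero]
      exact hzv
    have hns := nsp s A δ' hδ'0 hδ' hRIP' g hg0 hgne S hScard
    have hsplitz : l1norm z = ∑ i ∈ S, |z i| + ∑ i ∈ Sᶜ, |z i| :=
      (Finset.sum_add_sum_compl S _).symm
    have hsplitv : l1norm v = ∑ i ∈ S, |v i| := by
      rw [l1norm, ← Finset.sum_add_sum_compl S]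
      have : ∑ i ∈ Sᶜ, |v i| = 0 :=
        Finset.sum_eq_zero (fun i hi => by rw [hSz i (Finset.mem_compl.mp hi), abs_zero])
      rw [this, add_zero]
    have h1 : ∀ i, |v i| - |g i| ≤ |z i| := by
      intro i
      have : z i = v i + g i := by simp [hgdef]
      rw [this]
      have := abs_add_le (v i + g i) (-g i)
      simp only [add_neg_cancel_right, abs_neg] at this
      linarith
    have h2 : ∀ i ∈ Sᶜ, |z i| = |g i| := by
      intro i hi
      have hvi : v i = 0 := hSz i (Finset.mem_compl.mp hi)
      have : z i = g i := by simp [hgdef, hvi]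
      rw [this]
    have hS1 : ∑ i ∈ S, (|v i| - |g i|) ≤ ∑ i ∈ S, |z i| :=
      Finset.sum_le_sum (fun i _ => h1 i)
    have hS2 : ∑ i ∈ Sᶜ, |z i| = ∑ i ∈ Sᶜ, |g i| :=
      Finset.sum_congr rfl h2
    rw [hsplitz, hsplitv, hS2]
    rw [Finset.sum_sub_distrib] at hS1
    linarith
  constructor
  · intro z hz
    by_cases hzv : z = v
    · rw [hzv]
    · exact le_of_lt (key z hz hzv)
  · intro z hz hle
    by_contra hzv
    exact absurd hle (not_le.mpr (key z hz hzv))
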